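/- Let π and π̂ be policies inducing state-occupancy measures d_π and d_π̂ in a finite-horizon MDP of horizon H, where d_π(s) = (1/H)·Σ_{t=1}^H P_π(s_t = s). Then ‖d_π − d_π̂‖₁ ≤ 2H · E_{s∼d_π}[ TV(π(·|s), π̂(·|s)) ]. -/

import Mathlib

open Finset

/-- State distribution at time `t` induced by policy `π` in an MDP with transition
kernel `P` and initial distribution `ρ`. -/
noncomputable def stateDist {S A : Type*} [Fintype S] [Fintype A]
    (P : S → A → S → ℝ) (ρ : S → ℝ) (π : S → A → ℝ) : ℕ → S → ℝ
  | 0 => ρ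
  | (t + 1) => fun s' => ∑ s : S, ∑ a : A, stateDist P ρ π t s * π s a * P s a s'

/-- Normalized state-occupancy measure over horizon `H`. -/
noncomputable def occupancy {S A : Type*} [Fintype S] [Fintype A]
    (P : S → A → S → ℝ) (ρ : S → ℝ) (π : S → A → ℝ) (H : ℕ) (s : S) : ℝ :=
  (1 / H) * ∑ t ∈ Finset.range H, stateDist P ρ π t s

lemma stateDist_nonneg {S A : Type*} [Fintype S] [Fintype A]
    (P : S → A → S → ℝ) (ρ : S → ℝ) (π : S → A → ℝ)
    (hP0 : ∀ s a s', 0 ≤ P s a s') (hρ0 : ∀ s, 0 ≤ ρ s)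
    (hπ0 : ∀ s a, 0 ≤ π s a) : ∀ t s, 0 ≤ stateDist P ρ π t s := by
  intro t
  induction t with
  | zero => exact hρ0
  | succ t ih =>
    intro s'
    apply Finset.sum_nonneg; intro s _
    apply Finset.sum_nonneg; intro a _
    exact mul_nonneg (mul_nonneg (ih s) (hπ0 s a)) (hP0 s a s')

lemma step_bound {S A : Type*} [Fintype S] [Fintype A]
    (P : S → A → S → ℝ) (ρ : S → ℝ) (π πhat : S → A → ℝ)
    (hP0 : ∀ s a s', 0 ≤ P s a s') (hP1 : ∀ s a, ∑ s' : S, P s a s' = 1)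
    (hρ0 : ∀ s, 0 ≤ ρ s) (hπ0 : ∀ s a, 0 ≤ π s a)
    (hπhat0 : ∀ s a, 0 ≤ πhat s a) (hπhat1 : ∀ s, ∑ a : A, πhat s a = 1)
    (t : ℕ) :
    ∑ s' : S, |stateDist P ρ π (t+1) s' - stateDist P ρ πhat (t+1) s'|
      ≤ (∑ s : S, |stateDist P ρ π t s - stateDist P ρ πhat t s|)
        + ∑ s : S, stateDist P ρ π t s * ∑ a : A, |π s a - πhat s a| := by
  set d := stateDist P ρ π t with hd
  set e := stateDist P ρ πhat t with he
  have hdn : ∀ s, 0 ≤ d s := stateDist_nonneg P ρ π hP0 hρ0 hπ0 t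
  have key : ∀ s', stateDist P ρ π (t+1) s' - stateDist P ρ πhat (t+1) s'
      = ∑ s : S, ∑ a : A, (d s * π s a - e s * πhat s a) * P s a s' := by
    intro s'
    show (∑ s : S, ∑ a : A, d s * π s a * P s a s')
        - (∑ s : S, ∑ a : A, e s * πhat s a * P s a s') = _
    rw [← Finset.sum_sub_distrib]
    refine Finset.sum_congr rfl fun s _ => ?_
    rw [← Finset.sum_sub_distrib]
    refine Finset.sum_congr rfl fun a _ => ?_
    ring
  calc ∑ s' : S, |stateDist P ρ π (t+1) s' - stateDist P ρ πhat (t+1) s'|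
      ≤ ∑ s' : S, ∑ s : S, ∑ a : A, |d s * π s a - e s * πhat s a| * P s a s' := by
        refine Finset.sum_le_sum fun s' _ => ?_
        rw [key s']
        refine (Finset.abs_sum_le_sum_abs _ _).trans ?_
        refine Finset.sum_le_sum fun s _ => ?_
        refine (Finset.abs_sum_le_sum_abs _ _).trans ?_
        refine Finset.sum_le_sum fun a _ => ?_
        rw [abs_mul, abs_of_nonneg (hP0 s a s')]
    _ = ∑ s : S, ∑ a : A, |d s * π s a - e s * πhat s a| := by
        rw [Finset.sum_comm]
        refine Finset.sum_congr rfl fun s _ => ?_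
        rw [Finset.sum_comm]
        refine Finset.sum_congr rfl fun a _ => ?_
        rw [← Finset.mul_sum, hP1 s a, mul_one]
    _ ≤ ∑ s : S, ∑ a : A,
          (|d s - e s| * πhat s a + d s * |π s a - πhat s a|) := by
        refine Finset.sum_le_sum fun s _ => Finset.sum_le_sum fun a _ => ?_
        have h1 : d s * π s a - e s * πhat s a
            = (d s - e s) * πhat s a + d s * (π s a - πhat s a) := by ring
        rw [h1]
        refine (abs_add_le _ _).trans ?_
        rw [abs_mul, abs_mul, abs_of_nonneg (hπhat0 s a), abs_of_nonneg (hdn s)]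
    _ = (∑ s : S, |d s - e s|)
        + ∑ s : S, d s * ∑ a : A, |π s a - πhat s a| := by
        rw [← Finset.sum_add_distrib]
        refine Finset.sum_congr rfl fun s _ => ?_
        rw [Finset.sum_add_distrib, ← Finset.mul_sum, ← Finset.mul_sum,
          hπhat1 s, mul_one]

/-- Occupancy-difference lemma:
`‖d_π − d_πhat‖₁ ≤ 2H·E_{s∼d_π}[TV(π(·|s), πhat(·|s))]`. -/
theorem occupancy_difference
    {S A : Type*} [Fintype S] [Fintype A]
    (P : S → A → S → ℝ) (ρ : S → ℝ) (π πhat : S → A → ℝ) (H : ℕ) (hH : 0 < H)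
    (hP0 : ∀ s a s', 0 ≤ P s a s') (hP1 : ∀ s a, ∑ s' : S, P s a s' = 1)
    (hρ0 : ∀ s, 0 ≤ ρ s) (hρ1 : ∑ s : S, ρ s = 1)
    (hπ0 : ∀ s a, 0 ≤ π s a) (hπ1 : ∀ s, ∑ a : A, π s a = 1)
    (hπhat0 : ∀ s a, 0 ≤ πhat s a) (hπhat1 : ∀ s, ∑ a : A, πhat s a = 1) :
    ∑ s : S, |occupancy P ρ π H s - occupancy P ρ πhat H s|
      ≤ 2 * H * ∑ s : S, occupancy P ρ π H s *
          ((1 / 2) * ∑ a : A, |π s a - πhat s a|) := by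
  set ε : ℕ → ℝ := fun t => ∑ s : S, stateDist P ρ π t s * ∑ a : A, |π s a - πhat s a|
    with hε
  have hεn : ∀ t, 0 ≤ ε t := by
    intro t
    refine Finset.sum_nonneg fun s _ => mul_nonneg
      (stateDist_nonneg P ρ π hP0 hρ0 hπ0 t s)
      (Finset.sum_nonneg fun a _ => abs_nonneg _)
  have tele : ∀ t, ∑ s : S, |stateDist P ρ π t s - stateDist P ρ πhat t s|
      ≤ ∑ u ∈ Finset.range t, ε u := by
    intro t
    induction t with
    | zero => simp [stateDist]
    | succ t ih =>
      rw [Finset.sum_range_succ]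
      exact (step_bound P ρ π πhat hP0 hP1 hρ0 hπ0 hπhat0 hπhat1 t).trans
        (add_le_add_left ih _)
  have hHne : (H : ℝ) ≠ 0 := Nat.cast_ne_zero.mpr hH.ne'
  have lhs_le : ∑ s : S, |occupancy P ρ π H s - occupancy P ρ πhat H s|
      ≤ ∑ u ∈ Finset.range H, ε u := by
    have step1 : ∀ s, |occupancy P ρ π H s - occupancy P ρ πhat H s|
        ≤ (1 / H) * ∑ t ∈ Finset.range H,
            |stateDist P ρ π t s - stateDist P ρ πhat t s| := by
      intro s
      unfold occupancy
      rw [← mul_sub, abs_mul, ← Finset.sum_sub_distrib]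
      have : |(1 : ℝ) / H| = 1 / H := abs_of_nonneg (by positivity)
      rw [this]
      exact mul_le_mul_of_nonneg_left (Finset.abs_sum_le_sum_abs _ _) (by positivity)
    calc ∑ s : S, |occupancy P ρ π H s - occupancy P ρ πhat H s|
        ≤ ∑ s : S, (1 / H) * ∑ t ∈ Finset.range H,
            |stateDist P ρ π t s - stateDist P ρ πhat t s| :=
          Finset.sum_le_sum fun s _ => step1 s
      _ = (1 / H) * ∑ t ∈ Finset.range H,
            ∑ s : S, |stateDist P ρ π t s - stateDist P ρ πhat t s| := by
          rw [← Finset.mul_sum, Finset.sum_comm]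
      _ ≤ (1 / H) * ∑ t ∈ Finset.range H, ∑ u ∈ Finset.range H, ε u := by
          refine mul_le_mul_of_nonneg_left (Finset.sum_le_sum fun t ht => ?_)
            (by positivity)
          refine (tele t).trans ?_
          refine Finset.sum_le_sum_of_subset_of_nonneg ?_ fun u _ _ => hεn u
          exact Finset.range_subset_range.mpr (Finset.mem_range.mp ht).le
      _ = ∑ u ∈ Finset.range H, ε u := by
          rw [Finset.sum_const, Finset.card_range, nsmul_eq_mul]
          field_simp
  have rhs_eq : 2 * (H : ℝ) * ∑ s : S, occupancy P ρ π H s *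
        ((1 / 2) * ∑ a : A, |π s a - πhat s a|)
      = ∑ u ∈ Finset.range H, ε u := by
    unfold occupancy
    rw [Finset.mul_sum]
    rw [show ∀ f : S → ℝ, ∑ s, 2 * (H:ℝ) * f s = ∑ s, 2 * (H:ℝ) * f s from fun _ => rfl]
    rw [hε]
    rw [Finset.sum_comm]
    refine Finset.sum_congr rfl fun s _ => ?_
    rw [← Finset.sum_mul]
    field_simp
  rw [rhs_eq]
  exact lhs_le
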